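/- Let G = (V, E) be a reaction graph embedded in ℝ^d, w ∈ ℝ^d, and suppose (y, y') ∈ E is a w-endotacticity-violating reaction (i.e., (y'−y)·w > 0, y is w-maximal among sources of edges whose reaction vector is not orthogonal to w). Then for every vertex z ∈ V reachable from y' by a directed path, z·w = y'·w and z is not a source of any edge whose reaction vector is non-orthogonal to w. In particular, y and y' lie in different strongly connected components of G. -/
import Mathlib


open Matrix Finset
open scoped Matrix Classical

abbrev Vec (d : ℕ) := Fin d → ℝ
abbrev Edge (d : ℕ) := Vec d × Vec d

/-- Sources of edges whose reaction vector is not orthogonal to `u`. -/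
def srcU {d : ℕ} (E : Finset (Edge d)) (u : Vec d) : Set (Vec d) :=
  {y | ∃ y', (y, y') ∈ E ∧ (y' - y) ⬝ᵥ u ≠ 0}

/-- `G` is `u`-endotactic: no `u`-endotacticity violating reaction. -/
def uEndotactic {d : ℕ} (E : Finset (Edge d)) (u : Vec d) : Prop :=
  ¬ ∃ y y', (y, y') ∈ E ∧ 0 < (y' - y) ⬝ᵥ u ∧ ∀ z ∈ srcU E u, z ⬝ᵥ u ≤ y ⬝ᵥ u

def Endotactic {d : ℕ} (E : Finset (Edge d)) : Prop := ∀ u : Vec d, uEndotactic E u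

/-- Reachability by a directed path. -/
def Reach {d : ℕ} (E : Finset (Edge d)) : Vec d → Vec d → Prop :=
  Relation.ReflTransGen (fun a b => (a, b) ∈ E)

def IsEig {d : ℕ} (A : Matrix (Fin d) (Fin d) ℝ) (μ : ℂ) : Prop :=
  ∃ v : Fin d → ℂ, v ≠ 0 ∧ (A.map Complex.ofReal).mulVec v = μ • v

/-- If `(y, y')` is a `w`-endotacticity violating reaction, then every vertex `z`
reachable from `y'` satisfies `z·w = y'·w` and is not a source of any edge with
reaction vector non-orthogonal to `w`; in particular `y` is not reachable from
`y'`, so `y` and `y'` lie in different strongly connected components. -/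
theorem stmt6 {d : ℕ} (E : Finset (Edge d)) (w : Vec d) (y y' : Vec d)
    (hE : (y, y') ∈ E) (hpos : 0 < (y' - y) ⬝ᵥ w)
    (hmax : ∀ z ∈ srcU E w, z ⬝ᵥ w ≤ y ⬝ᵥ w) :
    (∀ z, Reach E y' z →
      z ⬝ᵥ w = y' ⬝ᵥ w ∧ ∀ z', (z, z') ∈ E → (z' - z) ⬝ᵥ w = 0) ∧
    ¬ Reach E y' y := by
  have hyy : y ⬝ᵥ w < y' ⬝ᵥ w := by
    have := hpos; rw [sub_dotProduct] at this; linarith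
  have key : ∀ z, Reach E y' z →
      z ⬝ᵥ w = y' ⬝ᵥ w ∧ ∀ z', (z, z') ∈ E → (z' - z) ⬝ᵥ w = 0 := by
    intro z hz
    induction hz with
    | refl =>
      refine ⟨rfl, fun z' hz' => ?_⟩
      by_contra h
      have := hmax y' ⟨z', hz', h⟩
      linarith
    | tail hab hbc ih =>
      rename_i b c
      obtain ⟨hval, hedge⟩ := ih
      have h0 := hedge c hbc
      rw [sub_dotProduct] at h0
      have hcval : c ⬝ᵥ w = y' ⬝ᵥ w := by linarith
      refine ⟨hcval, fun z' hz' => ?_⟩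
      by_contra h
      have := hmax c ⟨z', hz', h⟩
      rw [hcval] at this
      linarith
  refine ⟨key, fun hr => ?_⟩
  have := (key y hr).1
  linarith
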